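/- Let N, M be positive integers, p : Fin N → ℝ³ vertex positions, and t : Fin M → Fin 3 → Fin N vertex indices of triangles such that: (i) for each triangle k, the points v₁ᵏ = p(t k 0), v₂ᵏ = p(t k 1), v₃ᵏ = p(t k 2) are affinely independent, and (ii) every vertex index i ∈ Fin N occurs as t k j for some k, j. For each k set e₁ᵏ = v₃ᵏ − v₂ᵏ, e₂ᵏ = v₁ᵏ − v₃ᵏ, e₃ᵏ = v₂ᵏ − v₁ᵏ, uᵏ = e₂ᵏ × e₃ᵏ, area a_k = ½‖uᵏ‖, unit normal n_k = uᵏ/‖uᵏ‖, centroid c_k = (v₁ᵏ+v₂ᵏ+v₃ᵏ)/3, and for f : Fin N → ℝ the discrete gradient G_k(f) = (uᵏ × (f₁ᵏ e₁ᵏ + f₂ᵏ e₂ᵏ + f₃ᵏ e₃ᵏ))/‖uᵏ‖² where fᵢᵏ = f(t k (i−1)), and the centroid value φ_k(f) = (f₁ᵏ+f₂ᵏ+f₃ᵏ)/3. Given target data w : Fin P → ℝ³, m : Fin P → ℝ³ unit vectors, b : Fin P → ℝ with b_j > 0, g : Fin P → ℝ, and γ_W > 0, define the discrete BV matching energy E(f)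 = Σ_k ∫_{T_k} |f₁ᵏ + ⟨G_k(f), x − v₁ᵏ⟩| dH²(x) + Σ_k a_k ‖G_k(f)‖ + (γ_W/2)[ Σ_{k,l} a_k a_l k((c_k,n_k,φ_k(f)),(c_l,n_l,φ_l(f))) − 2 Σ_{k,j} a_k b_j k((c_k,n_k,φ_k(f)),(w_j,m_j,g_j)) + Σ_{j,j'} b_j b_{j'} k((w_j,m_j,g_j),(w_{j'},m_{j'},g_{j'})) ], where T_k is the convex hull of {v₁ᵏ,v₂ᵏ,v₃ᵏ}. Then E attains its infimum over all f : Fin N → ℝ. -/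

import Mathlib

open MeasureTheory Filter Topology
open scoped RealInnerProductSpace

noncomputable section

/-- The 3-dimensional Euclidean space in which the fshapes live. -/
abbrev E3 := EuclideanSpace ℝ (Fin 3)

/-- The cross product on `ℝ³`. -/
def cross3 (u v : E3) : E3 :=
  (WithLp.equiv 2 (Fin 3 → ℝ)).symm
    ![u 1 * v 2 - u 2 * v 1, u 2 * v 0 - u 0 * v 2, u 0 * v 1 - u 1 * v 0]

/-- The Gaussian kernel on `ℝ³ × ℝ³ × ℝ` with parameters `σe, σt, σf`. -/
def kern (σe σt σf : ℝ) (p q : E3 × E3 × ℝ) : ℝ :=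
  Real.exp (-‖p.1 - q.1‖ ^ 2 / σe ^ 2) *
    Real.exp (-(2 * (1 - ⟪p.2.1, q.2.1⟫ ^ 2)) / σt ^ 2) *
    Real.exp (-(p.2.2 - q.2.2) ^ 2 / σf ^ 2)

/-- `uᵏ = e₂ᵏ × e₃ᵏ` where `e₂ᵏ = v₁ − v₃` and `e₃ᵏ = v₂ − v₁`. -/
def triU (v₁ v₂ v₃ : E3) : E3 := cross3 (v₁ - v₃) (v₂ - v₁)

/-- The area `a_k = ½‖uᵏ‖` of the triangle with vertices `v₁ v₂ v₃`. -/
def triArea (v₁ v₂ v₃ : E3) : ℝ := ‖triU v₁ v₂ v₃‖ / 2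

/-- The unit normal `n_k = uᵏ/‖uᵏ‖` of the triangle with vertices `v₁ v₂ v₃`. -/
def triNormal (v₁ v₂ v₃ : E3) : E3 := ‖triU v₁ v₂ v₃‖⁻¹ • triU v₁ v₂ v₃

/-- The centroid `c_k = (v₁+v₂+v₃)/3` of the triangle with vertices `v₁ v₂ v₃`. -/
def triCentroid (v₁ v₂ v₃ : E3) : E3 := (3 : ℝ)⁻¹ • (v₁ + v₂ + v₃)

/-- The discrete (constant) gradient
`G_k(f) = (uᵏ × (f₁ e₁ᵏ + f₂ e₂ᵏ + f₃ e₃ᵏ))/‖uᵏ‖²` of the affine interpolant of the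
values `f₁ f₂ f₃` at the vertices `v₁ v₂ v₃`. -/
def triGrad (v₁ v₂ v₃ : E3) (f₁ f₂ f₃ : ℝ) : E3 :=
  (‖triU v₁ v₂ v₃‖ ^ 2)⁻¹ •
    cross3 (triU v₁ v₂ v₃) (f₁ • (v₃ - v₂) + f₂ • (v₁ - v₃) + f₃ • (v₂ - v₁))

/-! ### Auxiliary coordinate toolkit -/

lemma cross3_apply (u v : E3) (i : Fin 3) :
    cross3 u v i =
      ![u 1 * v 2 - u 2 * v 1, u 2 * v 0 - u 0 * v 2, u 0 * v 1 - u 1 * v 0] i := rfl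

lemma E3.inner_apply (x y : E3) : ⟪x, y⟫ = x 0 * y 0 + x 1 * y 1 + x 2 * y 2 := by
  simp [PiLp.inner_apply, Fin.sum_univ_three, RCLike.inner_apply, mul_comm]

lemma E3.norm_sq (x : E3) : ‖x‖ ^ 2 = x 0 ^ 2 + x 1 ^ 2 + x 2 ^ 2 := by
  rw [← real_inner_self_eq_norm_sq, E3.inner_apply]; ring

lemma E3.ext_three {x y : E3} (h0 : x 0 = y 0) (h1 : x 1 = y 1) (h2 : x 2 = y 2) : x = y := by
  ext i; fin_cases i <;> assumption

/-! ### The Lagrange identity and nondegenerate triangles -/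

lemma lagrange3 (a b : E3) : ⟪a, b⟫ ^ 2 = ‖a‖ ^ 2 * ‖b‖ ^ 2 - ‖cross3 a b‖ ^ 2 := by
  rw [E3.inner_apply, E3.norm_sq, E3.norm_sq, E3.norm_sq]
  simp only [cross3_apply, Matrix.cons_val_zero, Matrix.cons_val_one, Matrix.head_cons,
    Matrix.cons_val_two, Matrix.tail_cons]
  ring

lemma triU_ne_zero {v₁ v₂ v₃ : E3} (h : AffineIndependent ℝ ![v₁, v₂, v₃]) :
    triU v₁ v₂ v₃ ≠ 0 := by
  intro h0
  set a := v₁ - v₃ with ha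
  set b := v₂ - v₁ with hb
  have hinj := h.injective
  have ha0 : a ≠ 0 := by
    rw [ha, sub_ne_zero]
    intro hh
    have : (0 : Fin 3) = 2 := hinj (by simpa using hh)
    simp at this
  have hb0 : b ≠ 0 := by
    rw [hb, sub_ne_zero]
    intro hh
    have : (1 : Fin 3) = 0 := hinj (by simpa using hh)
    simp at this
  have hl : ⟪a, b⟫ ^ 2 = (‖a‖ * ‖b‖) ^ 2 := by
    have := lagrange3 a b
    rw [show cross3 a b = triU v₁ v₂ v₃ from rfl, h0] at this
    rw [this]; simp; ring
  have habs : ‖⟪a, b⟫‖ = ‖a‖ * ‖b‖ := by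
    have h1 : |⟪a, b⟫| ^ 2 = (‖a‖ * ‖b‖) ^ 2 := by rw [sq_abs]; exact hl
    rw [Real.norm_eq_abs]
    exact (pow_left_inj₀ (abs_nonneg _)
      (mul_nonneg (norm_nonneg a) (norm_nonneg b)) two_ne_zero).1 h1
  obtain ⟨r, hr0, hrb⟩ := (norm_inner_eq_norm_iff ha0 hb0).1 habs
  have key := affineIndependent_iff.1 h Finset.univ ![1 + r, -1, -r] (by
    simp [Fin.sum_univ_three]; try ring) (by
    simp only [Fin.sum_univ_three, Matrix.cons_val_zero, Matrix.cons_val_one, Matrix.head_cons,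
      Matrix.cons_val_two, Matrix.tail_cons]
    have : v₂ = v₁ + r • (v₁ - v₃) := by rw [← hrb, hb]; abel
    rw [this]
    module)
  have := key 1 (Finset.mem_univ _)
  simp at this

/-! ### Interpolation identities -/

set_option maxHeartbeats 1000000 in
lemma interp_key₂ (v₁ v₂ v₃ : E3) (f₁ f₂ f₃ : ℝ) :
    ⟪cross3 (triU v₁ v₂ v₃) (f₁ • (v₃ - v₂) + f₂ • (v₁ - v₃) + f₃ • (v₂ - v₁)), v₂ - v₁⟫
      = (f₂ - f₁) * ‖triU v₁ v₂ v₃‖ ^ 2 := by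
  rw [E3.inner_apply, E3.norm_sq]
  simp only [triU, cross3_apply, PiLp.sub_apply, PiLp.add_apply, PiLp.smul_apply, smul_eq_mul,
    Matrix.cons_val_zero, Matrix.cons_val_one, Matrix.head_cons, Matrix.cons_val_two,
    Matrix.tail_cons]
  ring

set_option maxHeartbeats 1000000 in
lemma interp_key₃ (v₁ v₂ v₃ : E3) (f₁ f₂ f₃ : ℝ) :
    ⟪cross3 (triU v₁ v₂ v₃) (f₁ • (v₃ - v₂) + f₂ • (v₁ - v₃) + f₃ • (v₂ - v₁)), v₃ - v₁⟫
      = (f₃ - f₁) * ‖triU v₁ v₂ v₃‖ ^ 2 := by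
  rw [E3.inner_apply, E3.norm_sq]
  simp only [triU, cross3_apply, PiLp.sub_apply, PiLp.add_apply, PiLp.smul_apply, smul_eq_mul,
    Matrix.cons_val_zero, Matrix.cons_val_one, Matrix.head_cons, Matrix.cons_val_two,
    Matrix.tail_cons]
  ring

lemma interp₂ (v₁ v₂ v₃ : E3) (f₁ f₂ f₃ : ℝ) (h : triU v₁ v₂ v₃ ≠ 0) :
    ⟪triGrad v₁ v₂ v₃ f₁ f₂ f₃, v₂ - v₁⟫ = f₂ - f₁ := by
  have hn : ‖triU v₁ v₂ v₃‖ ^ 2 ≠ 0 := pow_ne_zero _ (norm_ne_zero_iff.2 h)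
  rw [triGrad, real_inner_smul_left, interp_key₂, inv_mul_eq_div, mul_div_assoc,
    div_self hn, mul_one]

lemma interp₃ (v₁ v₂ v₃ : E3) (f₁ f₂ f₃ : ℝ) (h : triU v₁ v₂ v₃ ≠ 0) :
    ⟪triGrad v₁ v₂ v₃ f₁ f₂ f₃, v₃ - v₁⟫ = f₃ - f₁ := by
  have hn : ‖triU v₁ v₂ v₃‖ ^ 2 ≠ 0 := pow_ne_zero _ (norm_ne_zero_iff.2 h)
  rw [triGrad, real_inner_smul_left, interp_key₃, inv_mul_eq_div, mul_div_assoc,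
    div_self hn, mul_one]

/-! ### Linearity of the gradient -/

set_option maxHeartbeats 1000000 in
lemma triGrad_decomp (v₁ v₂ v₃ : E3) (x y z : ℝ) :
    triGrad v₁ v₂ v₃ x y z =
      x • triGrad v₁ v₂ v₃ 1 0 0 + y • triGrad v₁ v₂ v₃ 0 1 0 + z • triGrad v₁ v₂ v₃ 0 0 1 := by
  refine E3.ext_three ?_ ?_ ?_ <;>
    simp only [triGrad, triU, cross3_apply, PiLp.sub_apply, PiLp.add_apply, PiLp.smul_apply,
      smul_eq_mul, Matrix.cons_val_zero, Matrix.cons_val_one, Matrix.head_cons,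
      Matrix.cons_val_two, Matrix.tail_cons] <;> ring

lemma triGrad_smul (v₁ v₂ v₃ : E3) (r x y z : ℝ) :
    triGrad v₁ v₂ v₃ (r * x) (r * y) (r * z) = r • triGrad v₁ v₂ v₃ x y z := by
  rw [triGrad_decomp v₁ v₂ v₃ (r * x), triGrad_decomp v₁ v₂ v₃ x]
  module

/-! ### Hausdorff measure of a nondegenerate triangle -/

open Set in
lemma hausdorff2_eq_volume : (μH[2] : Measure (Fin 2 → ℝ)) = volume := by
  have := MeasureTheory.hausdorffMeasure_pi_real (ι := Fin 2)
  simpa using this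

open Set ENNReal NNReal in
lemma tri_measure_pos_finite {v₁ v₂ v₃ : E3} (hu : triU v₁ v₂ v₃ ≠ 0) :
    0 < μH[2] (convexHull ℝ {v₁, v₂, v₃} : Set E3) ∧
      μH[2] (convexHull ℝ {v₁, v₂, v₃} : Set E3) < ⊤ := by
  set a : E3 := v₂ - v₁ with ha
  set b : E3 := v₃ - v₁ with hb
  have hu' : cross3 a b = triU v₁ v₂ v₃ := by
    refine E3.ext_three ?_ ?_ ?_ <;>
      simp only [triU, cross3_apply, PiLp.sub_apply, Matrix.cons_val_zero, Matrix.cons_val_one,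
        Matrix.head_cons, Matrix.cons_val_two, Matrix.tail_cons, ha, hb] <;> ring
  set u : E3 := cross3 a b with hudef
  have hu0 : u ≠ 0 := by rw [hu']; exact hu
  have hn2 : ‖u‖ ^ 2 ≠ 0 := pow_ne_zero _ (norm_ne_zero_iff.2 hu0)
  set w₀ : E3 := (‖u‖ ^ 2)⁻¹ • cross3 b u with hw0
  set w₁ : E3 := (‖u‖ ^ 2)⁻¹ • cross3 u a with hw1
  have key0a : ⟪w₀, a⟫ = 1 := by
    rw [hw0, real_inner_smul_left]
    have : ⟪cross3 b u, a⟫ = ‖u‖ ^ 2 := by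
      rw [E3.inner_apply, E3.norm_sq]
      simp only [hudef, cross3_apply, Matrix.cons_val_zero, Matrix.cons_val_one,
        Matrix.head_cons, Matrix.cons_val_two, Matrix.tail_cons]
      ring
    rw [this, inv_mul_cancel₀ hn2]
  have key0b : ⟪w₀, b⟫ = 0 := by
    rw [hw0, real_inner_smul_left]
    have : ⟪cross3 b u, b⟫ = 0 := by
      rw [E3.inner_apply]
      simp only [hudef, cross3_apply, Matrix.cons_val_zero, Matrix.cons_val_one,
        Matrix.head_cons, Matrix.cons_val_two, Matrix.tail_cons]
      ring
    rw [this, mul_zero]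
  have key1a : ⟪w₁, a⟫ = 0 := by
    rw [hw1, real_inner_smul_left]
    have : ⟪cross3 u a, a⟫ = 0 := by
      rw [E3.inner_apply]
      simp only [hudef, cross3_apply, Matrix.cons_val_zero, Matrix.cons_val_one,
        Matrix.head_cons, Matrix.cons_val_two, Matrix.tail_cons]
      ring
    rw [this, mul_zero]
  have key1b : ⟪w₁, b⟫ = 1 := by
    rw [hw1, real_inner_smul_left]
    have : ⟪cross3 u a, b⟫ = ‖u‖ ^ 2 := by
      rw [E3.inner_apply, E3.norm_sq]
      simp only [hudef, cross3_apply, Matrix.cons_val_zero, Matrix.cons_val_one,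
        Matrix.head_cons, Matrix.cons_val_two, Matrix.tail_cons]
      ring
    rw [this, inv_mul_cancel₀ hn2]
  -- the parametrization and its left inverse
  set L : (Fin 2 → ℝ) →L[ℝ] E3 :=
    (ContinuousLinearMap.proj 0).smulRight a + (ContinuousLinearMap.proj 1).smulRight b with hL
  have hLq : ∀ q : Fin 2 → ℝ, L q = q 0 • a + q 1 • b := fun q => rfl
  set F : (Fin 2 → ℝ) → E3 := fun q => v₁ + L q with hF
  set Gl : E3 →L[ℝ] (Fin 2 → ℝ) :=
    ContinuousLinearMap.pi ![innerSL ℝ w₀, innerSL ℝ w₁] with hGl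
  set g : E3 → (Fin 2 → ℝ) := fun x => Gl (x - v₁) with hg
  have hgF : ∀ q, g (F q) = q := by
    intro q
    have hx : F q - v₁ = q 0 • a + q 1 • b := by rw [hF]; simp [hLq]
    funext i
    fin_cases i
    · show ⟪w₀, F q - v₁⟫ = q 0
      rw [hx, inner_add_right, real_inner_smul_right, real_inner_smul_right, key0a, key0b]; ring
    · show ⟪w₁, F q - v₁⟫ = q 1
      rw [hx, inner_add_right, real_inner_smul_right, real_inner_smul_right, key1a, key1b]; ring
  -- Lipschitz
  have hFL : LipschitzWith ‖L‖₊ F := by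
    apply LipschitzWith.of_dist_le_mul
    intro x y
    rw [hF]
    simp only [dist_add_left]
    exact L.lipschitz.dist_le_mul x y
  have hgL : LipschitzWith ‖Gl‖₊ g := by
    apply LipschitzWith.of_dist_le_mul
    intro x y
    rw [hg]
    have := Gl.lipschitz.dist_le_mul (x - v₁) (y - v₁)
    simpa [dist_sub_right] using this
  -- standard simplex in the parameter plane
  set P1 : Fin 2 → ℝ := ![1, 0] with hP1
  set P2 : Fin 2 → ℝ := ![0, 1] with hP2
  set Δ : Set (Fin 2 → ℝ) := convexHull ℝ ({0, P1, P2} : Set (Fin 2 → ℝ)) with hΔ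
  set Faff : (Fin 2 → ℝ) →ᵃ[ℝ] E3 :=
    { toFun := F
      linear := L.toLinearMap
      map_vadd' := by
        intro q v
        show F (v + q) = L v + F q
        rw [hF]
        simp only [map_add]
        abel } with hFaff
  have hF0 : F 0 = v₁ := by rw [hF]; simp
  have hFP1 : F P1 = v₂ := by
    show v₁ + L P1 = v₂
    have : L P1 = a := by
      rw [hLq]
      norm_num [hP1]
    rw [this, ha]
    abel
  have hFP2 : F P2 = v₃ := by
    show v₁ + L P2 = v₃
    have : L P2 = b := by
      rw [hLq]
      norm_num [hP2]
    rw [this, hb]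
    abel
  have himg : F '' ({0, P1, P2} : Set (Fin 2 → ℝ)) = {v₁, v₂, v₃} := by
    rw [Set.image_insert_eq, Set.image_insert_eq, Set.image_singleton, hF0, hFP1, hFP2]
  have hTΔ : (convexHull ℝ {v₁, v₂, v₃} : Set E3) = F '' Δ := by
    have : F '' Δ = convexHull ℝ (F '' ({0, P1, P2} : Set (Fin 2 → ℝ))) :=
      Faff.image_convexHull _
    rw [this, himg]
  have hΔT : g '' (convexHull ℝ {v₁, v₂, v₃} : Set E3) = Δ := by
    rw [hTΔ, ← Set.image_comp]
    have : g ∘ F = id := funext hgF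
    rw [this, Set.image_id]
  -- volume bounds for Δ
  have hΔsub : Δ ⊆ Set.univ.pi fun _ : Fin 2 => Icc (0 : ℝ) 1 := by
    refine convexHull_min ?_ (convex_pi fun i _ => convex_Icc 0 1)
    intro x hx
    intro i _
    rcases hx with rfl | rfl | rfl <;> fin_cases i <;>
      norm_num [hP1, hP2]
  have hboxsub : (Set.univ.pi fun _ : Fin 2 => Icc (0 : ℝ) (1/2)) ⊆ Δ := by
    intro x hx
    have hx0 := hx 0 (Set.mem_univ _)
    have hx1 := hx 1 (Set.mem_univ _)
    simp only [Icc] at hx0 hx1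
    obtain ⟨h00, h01⟩ := hx0
    obtain ⟨h10, h11⟩ := hx1
    have h1x : (0:ℝ) < 1 - x 1 := by linarith
    set z : Fin 2 → ℝ := ((1 - x 1)⁻¹ * x 0) • P1 with hz
    have hzmem : z ∈ Δ := by
      rw [hΔ]
      have h01' : x 0 ≤ 1 - x 1 := by linarith
      have hc : (1 - x 1)⁻¹ * x 0 ∈ Icc (0:ℝ) 1 := by
        constructor
        · positivity
        · rw [inv_mul_le_iff₀ h1x]; linarith
      have : z ∈ segment ℝ (0 : Fin 2 → ℝ) P1 := by
        refine ⟨1 - (1 - x 1)⁻¹ * x 0, (1 - x 1)⁻¹ * x 0, by linarith [hc.2], hc.1, by ring, ?_⟩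
        rw [hz]; simp
      exact segment_subset_convexHull (by simp) (by simp) this
    have hP2mem : P2 ∈ Δ := subset_convexHull ℝ _ (by simp)
    have hxseg : x ∈ segment ℝ z P2 := by
      refine ⟨1 - x 1, x 1, by linarith, h10, by ring, ?_⟩
      funext i
      fin_cases i
      · show (1 - x 1) * ((1 - x 1)⁻¹ * x 0 * P1 0) + x 1 * P2 0 = x 0
        have hp1 : P1 0 = 1 := rfl
        have hp2 : P2 0 = 0 := rfl
        rw [hp1, hp2]
        field_simp
        ring
      · show (1 - x 1) * ((1 - x 1)⁻¹ * x 0 * P1 1) + x 1 * P2 1 = x 1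
        have hp1 : P1 1 = 0 := rfl
        have hp2 : P2 1 = 1 := rfl
        rw [hp1, hp2]
        ring
    exact (convex_convexHull ℝ _).segment_subset hzmem hP2mem hxseg
  have hΔpos : 0 < μH[2] Δ := by
    rw [hausdorff2_eq_volume]
    refine lt_of_lt_of_le ?_ (measure_mono hboxsub)
    rw [volume_pi_pi]
    simp only [Real.volume_Icc]
    norm_num [pow_two]
  have hΔfin : μH[2] Δ < ⊤ := by
    rw [hausdorff2_eq_volume]
    refine lt_of_le_of_lt (measure_mono hΔsub) ?_
    rw [volume_pi_pi]
    simp [Real.volume_Icc]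
  constructor
  · rcases eq_or_ne (μH[2] (convexHull ℝ {v₁, v₂, v₃} : Set E3)) 0 with h0 | h0
    · exfalso
      have h2 : μH[2] Δ ≤ (‖Gl‖₊ : ℝ≥0∞) ^ (2:ℝ) * μH[2] (convexHull ℝ {v₁, v₂, v₃} : Set E3) := by
        rw [← hΔT]
        exact hgL.hausdorffMeasure_image_le (by norm_num) _
      rw [h0, mul_zero] at h2
      exact absurd (le_antisymm h2 zero_le) (ne_of_gt hΔpos)
    · exact pos_iff_ne_zero.2 h0
  · have h1 : μH[2] (convexHull ℝ {v₁, v₂, v₃} : Set E3) ≤ (‖L‖₊ : ℝ≥0∞) ^ (2:ℝ) * μH[2] Δ := by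
      rw [hTΔ]
      exact hFL.hausdorffMeasure_image_le (by norm_num) _
    refine lt_of_le_of_lt h1 (ENNReal.mul_lt_top ?_ hΔfin)
    exact ENNReal.rpow_lt_top_of_nonneg (by norm_num) ENNReal.coe_ne_top

/-! ### Continuity of the pieces -/

lemma contGrad {N : ℕ} (v₁ v₂ v₃ : E3) (i₁ i₂ i₃ : Fin N) :
    Continuous fun f : Fin N → ℝ => triGrad v₁ v₂ v₃ (f i₁) (f i₂) (f i₃) := by
  have : (fun f : Fin N → ℝ => triGrad v₁ v₂ v₃ (f i₁) (f i₂) (f i₃)) =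
      fun f : Fin N → ℝ => f i₁ • triGrad v₁ v₂ v₃ 1 0 0 + f i₂ • triGrad v₁ v₂ v₃ 0 1 0 +
        f i₃ • triGrad v₁ v₂ v₃ 0 0 1 := funext fun f => triGrad_decomp v₁ v₂ v₃ _ _ _
  rw [this]
  fun_prop

lemma normGrad_le {N : ℕ} (v₁ v₂ v₃ : E3) (i₁ i₂ i₃ : Fin N) (f : Fin N → ℝ) :
    ‖triGrad v₁ v₂ v₃ (f i₁) (f i₂) (f i₃)‖ ≤
      ‖f‖ * (‖triGrad v₁ v₂ v₃ 1 0 0‖ + ‖triGrad v₁ v₂ v₃ 0 1 0‖ + ‖triGrad v₁ v₂ v₃ 0 0 1‖) := by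
  rw [triGrad_decomp]
  have h1 : ∀ i : Fin N, |f i| ≤ ‖f‖ := fun i => by
    simpa [Real.norm_eq_abs] using norm_le_pi_norm f i
  calc ‖f i₁ • triGrad v₁ v₂ v₃ 1 0 0 + f i₂ • triGrad v₁ v₂ v₃ 0 1 0 +
        f i₃ • triGrad v₁ v₂ v₃ 0 0 1‖
      ≤ ‖f i₁ • triGrad v₁ v₂ v₃ 1 0 0 + f i₂ • triGrad v₁ v₂ v₃ 0 1 0‖ +
        ‖f i₃ • triGrad v₁ v₂ v₃ 0 0 1‖ := norm_add_le _ _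
    _ ≤ ‖f i₁ • triGrad v₁ v₂ v₃ 1 0 0‖ + ‖f i₂ • triGrad v₁ v₂ v₃ 0 1 0‖ +
        ‖f i₃ • triGrad v₁ v₂ v₃ 0 0 1‖ := by
        have := norm_add_le (f i₁ • triGrad v₁ v₂ v₃ 1 0 0) (f i₂ • triGrad v₁ v₂ v₃ 0 1 0)
        linarith
    _ ≤ _ := by
        rw [norm_smul, norm_smul, norm_smul]
        have g1 := norm_nonneg (triGrad v₁ v₂ v₃ 1 0 0)
        have g2 := norm_nonneg (triGrad v₁ v₂ v₃ 0 1 0)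
        have g3 := norm_nonneg (triGrad v₁ v₂ v₃ 0 0 1)
        have := h1 i₁; have := h1 i₂; have := h1 i₃
        have hf : (0:ℝ) ≤ ‖f‖ := norm_nonneg f
        simp only [Real.norm_eq_abs]
        nlinarith [abs_nonneg (f i₁), abs_nonneg (f i₂), abs_nonneg (f i₃)]

open Set in
lemma contInt {N : ℕ} (v₁ v₂ v₃ : E3) (i₁ i₂ i₃ : Fin N)
    (hfin : μH[2] (convexHull ℝ ({v₁, v₂, v₃} : Set E3)) < ⊤) :
    Continuous fun f : Fin N → ℝ =>
      ∫ x in convexHull ℝ ({v₁, v₂, v₃} : Set E3),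
        |f i₁ + ⟪triGrad v₁ v₂ v₃ (f i₁) (f i₂) (f i₃), x - v₁⟫| ∂μH[2] := by
  set T := convexHull ℝ ({v₁, v₂, v₃} : Set E3) with hT
  have hfinset : ({v₁, v₂, v₃} : Set E3).Finite :=
    ((Set.finite_singleton v₃).insert v₂).insert v₁
  have hTb : Bornology.IsBounded T := (hfinset.isCompact_convexHull ℝ).isBounded
  obtain ⟨R, hR⟩ : ∃ R, ∀ x ∈ T, ‖x - v₁‖ ≤ R := by
    obtain ⟨R, hR⟩ := hTb.subset_closedBall v₁
    exact ⟨R, fun x hx => by simpa [dist_eq_norm] using hR hx⟩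
  haveI : Fact (μH[2] T < ⊤) := ⟨hfin⟩
  set C : ℝ := ‖triGrad v₁ v₂ v₃ 1 0 0‖ + ‖triGrad v₁ v₂ v₃ 0 1 0‖ + ‖triGrad v₁ v₂ v₃ 0 0 1‖
    with hC
  have hTmeas : MeasurableSet T :=
    (hfinset.isCompact_convexHull ℝ).isClosed.measurableSet
  rw [continuous_iff_continuousAt]
  intro f₀
  have hR0 : 0 ≤ R := le_trans (norm_nonneg _) (hR v₁ (subset_convexHull ℝ _ (by simp)))
  apply continuousAt_of_dominated (bound := fun _ => (‖f₀‖ + 1) * (1 + C * R))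
  · refine Eventually.of_forall fun f => (Continuous.abs ?_).aestronglyMeasurable
    exact continuous_const.add
      (Continuous.inner continuous_const (continuous_id.sub continuous_const))
  · refine eventually_nhds_iff.2 ⟨Metric.ball f₀ 1, fun f hf => ?_, Metric.isOpen_ball,
      Metric.mem_ball_self one_pos⟩
    refine (ae_restrict_iff' hTmeas).2 (Eventually.of_forall fun x hx => ?_)
    have hfn : ‖f‖ ≤ ‖f₀‖ + 1 := by
      have := norm_sub_norm_le f f₀
      have hd := le_of_lt (mem_ball_iff_norm.1 hf)
      linarith
    have h1 : |f i₁| ≤ ‖f‖ := by simpa [Real.norm_eq_abs] using norm_le_pi_norm f i₁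
    have h2 : ‖triGrad v₁ v₂ v₃ (f i₁) (f i₂) (f i₃)‖ ≤ ‖f‖ * C := normGrad_le v₁ v₂ v₃ i₁ i₂ i₃ f
    have h3 : |⟪triGrad v₁ v₂ v₃ (f i₁) (f i₂) (f i₃), x - v₁⟫| ≤ ‖f‖ * C * R := by
      refine le_trans (abs_real_inner_le_norm _ _) ?_
      have := hR x hx
      have hCn : 0 ≤ C := by positivity
      nlinarith [norm_nonneg (triGrad v₁ v₂ v₃ (f i₁) (f i₂) (f i₃)), norm_nonneg (x - v₁),
        norm_nonneg f]
    have habs : |f i₁ + ⟪triGrad v₁ v₂ v₃ (f i₁) (f i₂) (f i₃), x - v₁⟫| ≤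
        |f i₁| + |⟪triGrad v₁ v₂ v₃ (f i₁) (f i₂) (f i₃), x - v₁⟫| := abs_add_le _ _
    have hfn0 : 0 ≤ ‖f‖ := norm_nonneg f
    have hCn : 0 ≤ C := by positivity
    rw [Real.norm_eq_abs, abs_abs]
    have hCR : (0:ℝ) ≤ 1 + C * R := by positivity
    calc |f i₁ + ⟪triGrad v₁ v₂ v₃ (f i₁) (f i₂) (f i₃), x - v₁⟫|
        ≤ ‖f‖ + ‖f‖ * C * R := by linarith
      _ = ‖f‖ * (1 + C * R) := by ring
      _ ≤ (‖f₀‖ + 1) * (1 + C * R) := mul_le_mul_of_nonneg_right hfn hCR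
  · exact integrable_const _
  · refine Eventually.of_forall fun x => (Continuous.abs ?_).continuousAt
    exact (continuous_apply i₁).add
      (Continuous.inner (contGrad v₁ v₂ v₃ i₁ i₂ i₃) continuous_const)

lemma kern_cont {α : Type*} [TopologicalSpace α] (σe σt σf : ℝ) (c₁ n₁ c₂ n₂ : E3)
    {u v : α → ℝ} (hu : Continuous u) (hv : Continuous v) :
    Continuous fun x => kern σe σt σf (c₁, n₁, u x) (c₂, n₂, v x) := by
  show Continuous fun x => Real.exp (-‖c₁ - c₂‖ ^ 2 / σe ^ 2) *
    Real.exp (-(2 * (1 - ⟪n₁, n₂⟫ ^ 2)) / σt ^ 2) *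
    Real.exp (-(u x - v x) ^ 2 / σf ^ 2)
  exact (continuous_const.mul continuous_const).mul
    (Real.continuous_exp.comp ((((hu.sub hv).pow 2).neg).div_const _))

/-! ### Kernel bounds -/

lemma kern_pos (σe σt σf : ℝ) (p q : E3 × E3 × ℝ) : 0 < kern σe σt σf p q := by
  unfold kern; positivity

lemma kern_le_one {σe σt σf : ℝ} (hσe : 0 < σe) (hσt : 0 < σt) (hσf : 0 < σf)
    {p q : E3 × E3 × ℝ} (h1 : ‖p.2.1‖ = 1) (h2 : ‖q.2.1‖ = 1) :
    kern σe σt σf p q ≤ 1 := by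
  unfold kern
  have e1 : Real.exp (-‖p.1 - q.1‖ ^ 2 / σe ^ 2) ≤ 1 := by
    rw [Real.exp_le_one_iff]
    exact div_nonpos_of_nonpos_of_nonneg (neg_nonpos.2 (by positivity)) (by positivity)
  have hin : ⟪p.2.1, q.2.1⟫ ^ 2 ≤ 1 := by
    have := abs_real_inner_le_norm p.2.1 q.2.1
    rw [h1, h2, mul_one] at this
    nlinarith [abs_nonneg (⟪p.2.1, q.2.1⟫), sq_abs (⟪p.2.1, q.2.1⟫)]
  have e2 : Real.exp (-(2 * (1 - ⟪p.2.1, q.2.1⟫ ^ 2)) / σt ^ 2) ≤ 1 := by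
    rw [Real.exp_le_one_iff]
    exact div_nonpos_of_nonpos_of_nonneg (neg_nonpos.2 (by nlinarith)) (by positivity)
  have e3 : Real.exp (-(p.2.2 - q.2.2) ^ 2 / σf ^ 2) ≤ 1 := by
    rw [Real.exp_le_one_iff]
    exact div_nonpos_of_nonpos_of_nonneg (neg_nonpos.2 (by positivity)) (by positivity)
  have p2 := Real.exp_pos (-(2 * (1 - ⟪p.2.1, q.2.1⟫ ^ 2)) / σt ^ 2)
  have p3 := Real.exp_pos (-(p.2.2 - q.2.2) ^ 2 / σf ^ 2)
  exact mul_le_one₀ (mul_le_one₀ e1 p2.le e2) p3.le e3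

/-! ### A coercivity principle -/

lemma coercive_bound {N : ℕ} (hN : 0 < N) (Φ : (Fin N → ℝ) → ℝ) (hcont : Continuous Φ)
    (hhomog : ∀ (r : ℝ) (f : Fin N → ℝ), Φ (r • f) = |r| * Φ f)
    (hpos : ∀ f : Fin N → ℝ, f ≠ 0 → 0 < Φ f) :
    ∃ c > 0, ∀ f : Fin N → ℝ, c * ‖f‖ ≤ Φ f := by
  haveI : Nonempty (Fin N) := ⟨⟨0, hN⟩⟩
  obtain ⟨f₀, hf₀S, hmin⟩ := (isCompact_sphere (0 : Fin N → ℝ) 1).exists_isMinOn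
    (NormedSpace.sphere_nonempty.2 zero_le_one) hcont.continuousOn
  have hf₀n : ‖f₀‖ = 1 := by simpa using mem_sphere_zero_iff_norm.1 hf₀S
  have hf₀0 : f₀ ≠ 0 := by intro h; rw [h, norm_zero] at hf₀n; norm_num at hf₀n
  refine ⟨Φ f₀, hpos f₀ hf₀0, fun f => ?_⟩
  rcases eq_or_ne f 0 with rfl | hf
  · have : Φ (0 : Fin N → ℝ) = 0 := by
      have := hhomog 0 0
      simpa using this
    simp [this]
  · have hr : 0 < ‖f‖ := norm_pos_iff.2 hf
    have hmem : ‖f‖⁻¹ • f ∈ Metric.sphere (0 : Fin N → ℝ) 1 := by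
      rw [mem_sphere_zero_iff_norm, norm_smul, norm_inv, norm_norm, inv_mul_cancel₀ (ne_of_gt hr)]
    have h1 : Φ f₀ ≤ Φ (‖f‖⁻¹ • f) := hmin hmem
    have h2 : Φ (‖f‖⁻¹ • f) = ‖f‖⁻¹ * Φ f := by
      rw [hhomog, abs_of_pos (by positivity)]
    rw [h2] at h1
    rw [mul_comm]
    calc ‖f‖ * Φ f₀ ≤ ‖f‖ * (‖f‖⁻¹ * Φ f) := mul_le_mul_of_nonneg_left h1 (le_of_lt hr)
      _ = Φ f := by field_simp

/-- The discrete `BV` matching energy (`P₁` finite elements: exact `L¹` norm of the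
affine interpolant, total variation of the interpolant and a discrete fvarifold
attachment term) attains its infimum over signals `f : Fin N → ℝ`. -/
theorem discrete_BV_energy_attains_min
    (N M P : ℕ) (hN : 0 < N) (hM : 0 < M) (hP : 0 < P)
    (p : Fin N → E3) (t : Fin M → Fin 3 → Fin N)
    (hindep : ∀ k, AffineIndependent ℝ (fun j : Fin 3 => p (t k j)))
    (hsurj : ∀ i : Fin N, ∃ k j, t k j = i)
    (w : Fin P → E3) (m : Fin P → E3) (hm : ∀ j, ‖m j‖ = 1)
    (b : Fin P → ℝ) (hb : ∀ j, 0 < b j) (g : Fin P → ℝ)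
    (σe σt σf γW : ℝ) (hσe : 0 < σe) (hσt : 0 < σt) (hσf : 0 < σf) (hγW : 0 < γW)
    (E : (Fin N → ℝ) → ℝ)
    (hE : ∀ f : Fin N → ℝ,
      E f =
        (∑ k, ∫ x in convexHull ℝ ({p (t k 0), p (t k 1), p (t k 2)} : Set E3),
            |f (t k 0) +
              ⟪triGrad (p (t k 0)) (p (t k 1)) (p (t k 2))
                  (f (t k 0)) (f (t k 1)) (f (t k 2)),
                x - p (t k 0)⟫| ∂μH[2])
        + (∑ k, triArea (p (t k 0)) (p (t k 1)) (p (t k 2)) *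
            ‖triGrad (p (t k 0)) (p (t k 1)) (p (t k 2))
                (f (t k 0)) (f (t k 1)) (f (t k 2))‖)
        + γW / 2 *
          ((∑ k, ∑ l,
              triArea (p (t k 0)) (p (t k 1)) (p (t k 2)) *
                triArea (p (t l 0)) (p (t l 1)) (p (t l 2)) *
                kern σe σt σf
                  (triCentroid (p (t k 0)) (p (t k 1)) (p (t k 2)),
                    triNormal (p (t k 0)) (p (t k 1)) (p (t k 2)),
                    (f (t k 0) + f (t k 1) + f (t k 2)) / 3)
                  (triCentroid (p (t l 0)) (p (t l 1)) (p (t l 2)),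
                    triNormal (p (t l 0)) (p (t l 1)) (p (t l 2)),
                    (f (t l 0) + f (t l 1) + f (t l 2)) / 3))
            - 2 * ∑ k, ∑ j,
                triArea (p (t k 0)) (p (t k 1)) (p (t k 2)) * b j *
                  kern σe σt σf
                    (triCentroid (p (t k 0)) (p (t k 1)) (p (t k 2)),
                      triNormal (p (t k 0)) (p (t k 1)) (p (t k 2)),
                      (f (t k 0) + f (t k 1) + f (t k 2)) / 3)
                    (w j, m j, g j)
            + ∑ j, ∑ j', b j * b j' *
                kern σe σt σf (w j, m j, g j) (w j', m j', g j'))) :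
    ∃ fstar : Fin N → ℝ, ∀ f : Fin N → ℝ, E fstar ≤ E f := by
  classical
  -- basic nondegeneracy facts
  have hiv : ∀ k, AffineIndependent ℝ ![p (t k 0), p (t k 1), p (t k 2)] := by
    intro k
    have h := hindep k
    have he : (fun j : Fin 3 => p (t k j)) = ![p (t k 0), p (t k 1), p (t k 2)] := by
      funext j; fin_cases j <;> rfl
    rwa [he] at h
  have huk : ∀ k, triU (p (t k 0)) (p (t k 1)) (p (t k 2)) ≠ 0 := fun k => triU_ne_zero (hiv k)
  have harpos : ∀ k, 0 < triArea (p (t k 0)) (p (t k 1)) (p (t k 2)) := fun k =>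
    div_pos (norm_pos_iff.2 (huk k)) two_pos
  have hmeas := fun k => tri_measure_pos_finite (huk k)
  have hnormal : ∀ k, ‖triNormal (p (t k 0)) (p (t k 1)) (p (t k 2))‖ = 1 := by
    intro k
    rw [triNormal, norm_smul, norm_inv, norm_norm,
      inv_mul_cancel₀ (norm_ne_zero_iff.2 (huk k))]
  -- named pieces of the energy
  set Φ : (Fin N → ℝ) → ℝ := fun f =>
    (∑ k, ∫ x in convexHull ℝ ({p (t k 0), p (t k 1), p (t k 2)} : Set E3),
        |f (t k 0) +
          ⟪triGrad (p (t k 0)) (p (t k 1)) (p (t k 2))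
              (f (t k 0)) (f (t k 1)) (f (t k 2)),
            x - p (t k 0)⟫| ∂μH[2])
    + (∑ k, triArea (p (t k 0)) (p (t k 1)) (p (t k 2)) *
        ‖triGrad (p (t k 0)) (p (t k 1)) (p (t k 2))
            (f (t k 0)) (f (t k 1)) (f (t k 2))‖) with hΦ
  set A : (Fin N → ℝ) → ℝ := fun f =>
    ∑ k, ∑ l,
      triArea (p (t k 0)) (p (t k 1)) (p (t k 2)) *
        triArea (p (t l 0)) (p (t l 1)) (p (t l 2)) *
        kern σe σt σf
          (triCentroid (p (t k 0)) (p (t k 1)) (p (t k 2)),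
            triNormal (p (t k 0)) (p (t k 1)) (p (t k 2)),
            (f (t k 0) + f (t k 1) + f (t k 2)) / 3)
          (triCentroid (p (t l 0)) (p (t l 1)) (p (t l 2)),
            triNormal (p (t l 0)) (p (t l 1)) (p (t l 2)),
            (f (t l 0) + f (t l 1) + f (t l 2)) / 3) with hA
  set B : (Fin N → ℝ) → ℝ := fun f =>
    ∑ k, ∑ j,
      triArea (p (t k 0)) (p (t k 1)) (p (t k 2)) * b j *
        kern σe σt σf
          (triCentroid (p (t k 0)) (p (t k 1)) (p (t k 2)),
            triNormal (p (t k 0)) (p (t k 1)) (p (t k 2)),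
            (f (t k 0) + f (t k 1) + f (t k 2)) / 3)
          (w j, m j, g j) with hB
  set D : ℝ := ∑ j, ∑ j', b j * b j' *
      kern σe σt σf (w j, m j, g j) (w j', m j', g j') with hD
  have hEΦ : ∀ f, E f = Φ f + γW / 2 * (A f - 2 * B f + D) := by
    intro f
    rw [hE f]
  -- continuity of Φ
  have hΦcont : Continuous Φ := by
    rw [hΦ]
    refine Continuous.add ?_ ?_
    · exact continuous_finset_sum _ fun k _ =>
        contInt (p (t k 0)) (p (t k 1)) (p (t k 2)) (t k 0) (t k 1) (t k 2) (hmeas k).2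
    · exact continuous_finset_sum _ fun k _ => continuous_const.mul
        (contGrad (p (t k 0)) (p (t k 1)) (p (t k 2)) (t k 0) (t k 1) (t k 2)).norm
  -- homogeneity of Φ
  have hΦhomog : ∀ (r : ℝ) (f : Fin N → ℝ), Φ (r • f) = |r| * Φ f := by
    intro r f
    rw [hΦ]
    simp only [Pi.smul_apply, smul_eq_mul, triGrad_smul, real_inner_smul_left, norm_smul,
      Real.norm_eq_abs, ← mul_add, abs_mul, MeasureTheory.integral_const_mul]
    rw [mul_add, Finset.mul_sum, Finset.mul_sum]
    congr 1
    exact Finset.sum_congr rfl fun k _ => by ring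
  -- nonnegativity of Φ
  have hΦnonneg : ∀ f, 0 ≤ Φ f := by
    intro f
    rw [hΦ]
    refine add_nonneg (Finset.sum_nonneg fun k _ => ?_) (Finset.sum_nonneg fun k _ =>
      mul_nonneg (harpos k).le (norm_nonneg _))
    exact MeasureTheory.integral_nonneg fun x => abs_nonneg _
  -- definiteness of Φ
  have hΦdef : ∀ f, Φ f = 0 → f = 0 := by
    intro f h0
    rw [hΦ] at h0
    simp only at h0
    have hs1 : 0 ≤ ∑ k, ∫ x in convexHull ℝ ({p (t k 0), p (t k 1), p (t k 2)} : Set E3),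
        |f (t k 0) +
          ⟪triGrad (p (t k 0)) (p (t k 1)) (p (t k 2)) (f (t k 0)) (f (t k 1)) (f (t k 2)),
            x - p (t k 0)⟫| ∂μH[2] :=
      Finset.sum_nonneg fun k _ => MeasureTheory.integral_nonneg fun x => abs_nonneg _
    have hs2 : 0 ≤ ∑ k, triArea (p (t k 0)) (p (t k 1)) (p (t k 2)) *
        ‖triGrad (p (t k 0)) (p (t k 1)) (p (t k 2)) (f (t k 0)) (f (t k 1)) (f (t k 2))‖ :=
      Finset.sum_nonneg fun k _ => mul_nonneg (harpos k).le (norm_nonneg _)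
    have h1 : ∑ k, ∫ x in convexHull ℝ ({p (t k 0), p (t k 1), p (t k 2)} : Set E3),
        |f (t k 0) +
          ⟪triGrad (p (t k 0)) (p (t k 1)) (p (t k 2)) (f (t k 0)) (f (t k 1)) (f (t k 2)),
            x - p (t k 0)⟫| ∂μH[2] = 0 := by linarith
    have h2 : ∑ k, triArea (p (t k 0)) (p (t k 1)) (p (t k 2)) *
        ‖triGrad (p (t k 0)) (p (t k 1)) (p (t k 2)) (f (t k 0)) (f (t k 1)) (f (t k 2))‖ = 0 := by
      linarith
    have hGzero : ∀ k, triGrad (p (t k 0)) (p (t k 1)) (p (t k 2))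
        (f (t k 0)) (f (t k 1)) (f (t k 2)) = 0 := by
      intro k
      have := (Finset.sum_eq_zero_iff_of_nonneg fun k _ =>
        mul_nonneg (harpos k).le (norm_nonneg _)).1 h2 k (Finset.mem_univ k)
      have hg0 := (mul_eq_zero.1 this).resolve_left (ne_of_gt (harpos k))
      exact norm_eq_zero.1 hg0
    have hIzero : ∀ k, (∫ x in convexHull ℝ ({p (t k 0), p (t k 1), p (t k 2)} : Set E3),
        |f (t k 0) +
          ⟪triGrad (p (t k 0)) (p (t k 1)) (p (t k 2)) (f (t k 0)) (f (t k 1)) (f (t k 2)),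
            x - p (t k 0)⟫| ∂μH[2]) = 0 := by
      intro k
      exact (Finset.sum_eq_zero_iff_of_nonneg fun k _ =>
        MeasureTheory.integral_nonneg fun x => abs_nonneg _).1 h1 k (Finset.mem_univ k)
    have hval0 : ∀ k, f (t k 0) = 0 := by
      intro k
      have hI := hIzero k
      simp only [hGzero, inner_zero_left, add_zero] at hI
      rw [MeasureTheory.setIntegral_const] at hI
      have hpos := (hmeas k).1
      have hfin := (hmeas k).2
      have htr : 0 < (μH[2] (convexHull ℝ
          ({p (t k 0), p (t k 1), p (t k 2)} : Set E3))).toReal :=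
        ENNReal.toReal_pos (ne_of_gt hpos) (ne_of_lt hfin)
      rw [smul_eq_mul] at hI
      have := (mul_eq_zero.1 hI).resolve_left (ne_of_gt htr)
      exact abs_eq_zero.1 this
    have hval1 : ∀ k, f (t k 1) = 0 := by
      intro k
      have h2' := interp₂ (p (t k 0)) (p (t k 1)) (p (t k 2))
        (f (t k 0)) (f (t k 1)) (f (t k 2)) (huk k)
      rw [hGzero k, inner_zero_left] at h2'
      have := hval0 k
      linarith
    have hval2 : ∀ k, f (t k 2) = 0 := by
      intro k
      have h3' := interp₃ (p (t k 0)) (p (t k 1)) (p (t k 2))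
        (f (t k 0)) (f (t k 1)) (f (t k 2)) (huk k)
      rw [hGzero k, inner_zero_left] at h3'
      have := hval0 k
      linarith
    funext i
    obtain ⟨k, j, rfl⟩ := hsurj i
    show f (t k j) = 0
    fin_cases j
    · exact hval0 k
    · exact hval1 k
    · exact hval2 k
  have hΦpos : ∀ f : Fin N → ℝ, f ≠ 0 → 0 < Φ f := fun f hf =>
    lt_of_le_of_ne (hΦnonneg f) fun h => hf (hΦdef f h.symm)
  -- lower bound on the attachment term
  set Csum : ℝ := γW / 2 *
    (2 * ∑ k, ∑ j, triArea (p (t k 0)) (p (t k 1)) (p (t k 2)) * b j) with hCsum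
  have hlow : ∀ f, Φ f - Csum ≤ E f := by
    intro f
    rw [hEΦ f]
    have hA0 : 0 ≤ A f := by
      rw [hA]
      refine Finset.sum_nonneg fun k _ => Finset.sum_nonneg fun l _ => ?_
      exact mul_nonneg (mul_nonneg (harpos k).le (harpos l).le) (kern_pos _ _ _ _ _).le
    have hD0 : 0 ≤ D := by
      rw [hD]
      refine Finset.sum_nonneg fun j _ => Finset.sum_nonneg fun j' _ => ?_
      exact mul_nonneg (mul_nonneg (hb j).le (hb j').le) (kern_pos _ _ _ _ _).le
    have hBle : B f ≤ ∑ k, ∑ j, triArea (p (t k 0)) (p (t k 1)) (p (t k 2)) * b j := by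
      rw [hB]
      refine Finset.sum_le_sum fun k _ => Finset.sum_le_sum fun j _ => ?_
      refine mul_le_of_le_one_right (mul_nonneg (harpos k).le (hb j).le) ?_
      exact kern_le_one hσe hσt hσf (hnormal k) (hm j)
    have hstep : -(2 * ∑ k, ∑ j, triArea (p (t k 0)) (p (t k 1)) (p (t k 2)) * b j) ≤
        A f - 2 * B f + D := by linarith
    have := mul_le_mul_of_nonneg_left hstep (by positivity : (0:ℝ) ≤ γW / 2)
    rw [hCsum]
    linarith
  -- continuity of E
  have hAcont : Continuous A := by
    rw [hA]
    refine continuous_finset_sum _ fun k _ => continuous_finset_sum _ fun l _ => ?_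
    exact continuous_const.mul (kern_cont σe σt σf _ _ _ _ (by fun_prop) (by fun_prop))
  have hBcont : Continuous B := by
    rw [hB]
    refine continuous_finset_sum _ fun k _ => continuous_finset_sum _ fun j _ => ?_
    exact continuous_const.mul (kern_cont σe σt σf _ _ _ _ (by fun_prop) continuous_const)
  have hEcont : Continuous E := by
    have hfe : E = fun f => Φ f + γW / 2 * (A f - 2 * B f + D) := funext hEΦ
    rw [hfe]
    exact hΦcont.add (continuous_const.mul
      ((hAcont.sub (continuous_const.mul hBcont)).add continuous_const))
  -- coercivity
  obtain ⟨c, hc, hcoer⟩ := coercive_bound hN Φ hΦcont hΦhomog hΦpos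
  set R : ℝ := max 1 ((E 0 + Csum) / c) with hR
  have hR1 : (1:ℝ) ≤ R := le_max_left _ _
  have hcR : E 0 + Csum ≤ c * R := by
    have h2 : (E 0 + Csum) / c ≤ R := le_max_right _ _
    calc E 0 + Csum = c * ((E 0 + Csum) / c) := by field_simp
      _ ≤ c * R := mul_le_mul_of_nonneg_left h2 hc.le
  obtain ⟨fstar, hfsmem, hfmin⟩ := (isCompact_closedBall (0 : Fin N → ℝ) R).exists_isMinOn
    ⟨0, Metric.mem_closedBall_self (by linarith)⟩ hEcont.continuousOn
  refine ⟨fstar, fun f => ?_⟩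
  by_cases hf : f ∈ Metric.closedBall (0 : Fin N → ℝ) R
  · exact hfmin hf
  · have hfn : R < ‖f‖ := by
      rw [Metric.mem_closedBall, dist_zero_right, not_le] at hf
      exact hf
    have hE0 : E fstar ≤ E 0 := hfmin (Metric.mem_closedBall_self (by linarith))
    have : E 0 ≤ E f := by
      have h1 := hlow f
      have h2 := hcoer f
      have h3 : c * R ≤ c * ‖f‖ := mul_le_mul_of_nonneg_left hfn.le hc.le
      linarith
    linarith
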